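/- Let c > 0, let α : ℝ → ℝ be continuously differentiable with α(ξ) ≥ 0 for all ξ, α(ξ) → +∞ as ξ → ±∞, and ∫_ℝ |α'(ξ)|/(c + α(ξ))² dξ < ∞. Then for every x ≠ 0 the limit K(x) := lim_{R→∞} ∫_{−R}^{R} e^{2πiξx}/(c + α(ξ)) dξ exists, and |K(x)| ≤ (1/(2π|x|)) ∫_ℝ |α'(ξ)|/(c + α(ξ))² dξ. -/

import Mathlib

open MeasureTheory Real Filter intervalIntegral

/-- Kernel decay estimate of Proposition 5.3: the kernel `K(x)` of `(𝒞 + c)⁻¹` exists as an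
improper Fourier-type integral for `x ≠ 0` and satisfies
`|K(x)| ≤ (2π|x|)⁻¹ ∫ |α'(ξ)|/(c+α(ξ))² dξ`. -/
theorem kernel_decay_estimate
    (c : ℝ) (hc : 0 < c) (α : ℝ → ℝ) (hα : ContDiff ℝ 1 α)
    (hpos : ∀ ξ : ℝ, 0 ≤ α ξ)
    (htop : Tendsto α atTop atTop)
    (hbot : Tendsto α atBot atTop)
    (hint : Integrable (fun ξ : ℝ => |deriv α ξ| / (c + α ξ) ^ 2))
    (x : ℝ) (hx : x ≠ 0) :
    ∃ K : ℂ,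
      Tendsto (fun R : ℝ => ∫ ξ in (-R)..R,
          Complex.exp (2 * (π : ℂ) * Complex.I * (ξ : ℂ) * (x : ℂ)) / ((c + α ξ : ℝ) : ℂ))
        atTop (nhds K) ∧
      ‖K‖ ≤ (1 / (2 * π * |x|)) * ∫ ξ : ℝ, |deriv α ξ| / (c + α ξ) ^ 2 := by
  set a : ℂ := 2 * (π : ℂ) * Complex.I * (x : ℂ) with ha_def
  have hax : a = ((2 * π * x : ℝ) : ℂ) * Complex.I := by push_cast [ha_def]; ring
  have ha : a ≠ 0 := by
    rw [hax]
    simp [Complex.I_ne_zero, pi_ne_zero, hx]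
  have hca : ∀ ξ : ℝ, (0:ℝ) < c + α ξ := fun ξ => by linarith [hpos ξ]
  have hcane : ∀ ξ : ℝ, ((c + α ξ : ℝ) : ℂ) ≠ 0 := fun ξ => by
    exact_mod_cast (hca ξ).ne'
  set v : ℝ → ℂ := fun ξ => ((c + α ξ : ℝ) : ℂ)⁻¹ with hv_def
  set v' : ℝ → ℂ := fun ξ => -(((deriv α ξ : ℝ) : ℂ)) / ((c + α ξ : ℝ) : ℂ) ^ 2 with hv'_def
  set u : ℝ → ℂ := fun ξ => a⁻¹ * Complex.exp (a * ξ) with hu_def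
  set u' : ℝ → ℂ := fun ξ => Complex.exp (a * ξ) with hu'_def
  -- derivative facts
  have hαd : ∀ ξ : ℝ, HasDerivAt α (deriv α ξ) ξ := fun ξ =>
    ((hα.differentiable one_ne_zero) ξ).hasDerivAt
  have hvd : ∀ ξ : ℝ, HasDerivAt v (v' ξ) ξ := by
    intro ξ
    have h1 : HasDerivAt (fun t => c + α t) (deriv α ξ) ξ := (hαd ξ).const_add c
    have h2 : HasDerivAt (fun t : ℝ => ((c + α t : ℝ) : ℂ)) (((deriv α ξ : ℝ) : ℂ)) ξ :=
      h1.ofReal_comp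
    have h3 := (hasDerivAt_const (𝕜 := ℝ) ξ (1:ℂ)).div h2 (hcane ξ)
    simp only [zero_mul, one_mul, zero_sub, one_div] at h3
    simpa [hv_def, hv'_def, Pi.div_def, one_div] using h3
  have hud : ∀ ξ : ℝ, HasDerivAt u (u' ξ) ξ := by
    intro ξ
    have h1 : HasDerivAt (fun t : ℝ => a * (t : ℂ)) a ξ := by
      simpa using (Complex.ofRealCLM.hasDerivAt (x := ξ)).const_mul a
    have h2 := h1.cexp
    have h3 := h2.const_mul a⁻¹
    have : a⁻¹ * (Complex.exp (a * ξ) * a) = Complex.exp (a * ξ) := by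
      field_simp
    simpa [hu_def, hu'_def, this] using h3
  -- continuity facts
  have hαc : Continuous α := hα.continuous
  have hα'c : Continuous (deriv α) := hα.continuous_deriv le_rfl
  have hvc : Continuous v := by
    apply Continuous.inv₀
    · exact Complex.continuous_ofReal.comp (continuous_const.add hαc)
    · exact hcane
  have hv'c : Continuous v' := by
    apply Continuous.div
    · exact (Complex.continuous_ofReal.comp hα'c).neg
    · exact (Complex.continuous_ofReal.comp (continuous_const.add hαc)).pow 2
    · intro ξ; exact pow_ne_zero 2 (hcane ξ)
  have huc : Continuous u :=
    continuous_const.mul (Complex.continuous_exp.comp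
      (continuous_const.mul Complex.continuous_ofReal))
  have hu'c : Continuous u' :=
    Complex.continuous_exp.comp (continuous_const.mul Complex.continuous_ofReal)
  -- norm computations
  have hnorm_exp : ∀ ξ : ℝ, ‖Complex.exp (a * ξ)‖ = 1 := by
    intro ξ
    have : a * (ξ : ℂ) = ((2 * π * x * ξ : ℝ) : ℂ) * Complex.I := by
      rw [hax]; push_cast; ring
    rw [this]
    exact Complex.norm_exp_ofReal_mul_I _
  have hpix : (0:ℝ) < 2 * π * |x| := by
    have := pi_pos
    have : (0:ℝ) < |x| := abs_pos.mpr hx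
    positivity
  have hnorm_a : ‖a‖ = 2 * π * |x| := by
    rw [hax, norm_mul, Complex.norm_real, Real.norm_eq_abs]
    have h2π : (0:ℝ) < 2 * π := by positivity
    simp [abs_mul, abs_of_pos pi_pos, abs_of_pos h2π, Complex.norm_I]
  have hnorm_u : ∀ ξ : ℝ, ‖u ξ‖ = (2 * π * |x|)⁻¹ := by
    intro ξ
    rw [hu_def]
    simp only [norm_mul, norm_inv, hnorm_a, hnorm_exp ξ, mul_one]
  have hnorm_v' : ∀ ξ : ℝ, ‖v' ξ‖ = |deriv α ξ| / (c + α ξ) ^ 2 := by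
    intro ξ
    rw [hv'_def]
    simp only [norm_div, norm_neg, norm_pow, Complex.norm_real, Real.norm_eq_abs]
    rw [abs_of_pos (hca ξ)]
  -- integrability of v' * u over ℝ
  have hInt : Integrable (fun ξ : ℝ => v' ξ * u ξ) := by
    apply Integrable.mono' (g := fun ξ : ℝ => (2 * π * |x|)⁻¹ * (|deriv α ξ| / (c + α ξ) ^ 2))
      (hint.const_mul _)
    · exact ((hv'c.mul huc).aestronglyMeasurable)
    · filter_upwards with ξ
      rw [norm_mul, hnorm_u ξ, hnorm_v' ξ, mul_comm]
  set J : ℂ := ∫ ξ : ℝ, v' ξ * u ξ with hJ_def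
  refine ⟨-J, ?_, ?_⟩
  · -- integration by parts identity
    have hibp : ∀ R : ℝ,
        (∫ ξ in (-R)..R, Complex.exp (2 * (π : ℂ) * Complex.I * (ξ : ℂ) * (x : ℂ)) /
          ((c + α ξ : ℝ) : ℂ))
        = v R * u R - v (-R) * u (-R) - ∫ ξ in (-R)..R, v' ξ * u ξ := by
      intro R
      have h := intervalIntegral.integral_mul_deriv_eq_deriv_mul
        (u := v) (v := u) (u' := v') (v' := u') (a := -R) (b := R)
        (fun ξ _ => hvd ξ) (fun ξ _ => hud ξ)
        (hv'c.intervalIntegrable _ _) (hu'c.intervalIntegrable _ _)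
      have heq : ∀ ξ : ℝ,
          Complex.exp (2 * (π : ℂ) * Complex.I * (ξ : ℂ) * (x : ℂ)) / ((c + α ξ : ℝ) : ℂ)
          = v ξ * u' ξ := by
        intro ξ
        rw [hv_def, hu'_def, div_eq_mul_inv, mul_comm]
        congr 2
        rw [ha_def]; ring
      calc (∫ ξ in (-R)..R, Complex.exp (2 * (π : ℂ) * Complex.I * (ξ : ℂ) * (x : ℂ)) /
              ((c + α ξ : ℝ) : ℂ))
          = ∫ ξ in (-R)..R, v ξ * u' ξ := by
            exact intervalIntegral.integral_congr fun ξ _ => heq ξ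
        _ = v R * u R - v (-R) * u (-R) - ∫ ξ in (-R)..R, v' ξ * u ξ := h
    rw [show (fun R : ℝ => ∫ ξ in (-R)..R,
        Complex.exp (2 * (π : ℂ) * Complex.I * (ξ : ℂ) * (x : ℂ)) / ((c + α ξ : ℝ) : ℂ))
        = fun R : ℝ => v R * u R - v (-R) * u (-R) - ∫ ξ in (-R)..R, v' ξ * u ξ from
        funext hibp]
    have hbound : IsBoundedUnder (· ≤ ·) atTop fun R : ℝ => ‖u R‖ :=
      ⟨(2 * π * |x|)⁻¹, Filter.eventually_map.mpr (Eventually.of_forall fun R =>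
        (hnorm_u R).le)⟩
    have hbound' : IsBoundedUnder (· ≤ ·) atTop fun R : ℝ => ‖u (-R)‖ :=
      ⟨(2 * π * |x|)⁻¹, Filter.eventually_map.mpr (Eventually.of_forall fun R =>
        (hnorm_u (-R)).le)⟩
    have hv0 : Tendsto (fun R : ℝ => v R) atTop (nhds 0) := by
      have h1 : Tendsto (fun R : ℝ => c + α R) atTop atTop :=
        tendsto_atTop_add_const_left atTop c htop
      have h2 : Tendsto (fun R : ℝ => (c + α R)⁻¹) atTop (nhds 0) := h1.inv_tendsto_atTop
      have := (Complex.continuous_ofReal.tendsto 0).comp h2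
      simpa [hv_def, Function.comp_def, Complex.ofReal_inv, Complex.ofReal_add] using this
    have hv0' : Tendsto (fun R : ℝ => v (-R)) atTop (nhds 0) := by
      have h1 : Tendsto (fun R : ℝ => c + α (-R)) atTop atTop :=
        tendsto_atTop_add_const_left atTop c (hbot.comp tendsto_neg_atTop_atBot)
      have h2 : Tendsto (fun R : ℝ => (c + α (-R))⁻¹) atTop (nhds 0) := h1.inv_tendsto_atTop
      have := (Complex.continuous_ofReal.tendsto 0).comp h2
      simpa [hv_def, Function.comp_def, Complex.ofReal_inv, Complex.ofReal_add] using this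
    have hbt1 : Tendsto (fun R : ℝ => v R * u R) atTop (nhds 0) :=
      hv0.zero_mul_isBoundedUnder_le hbound
    have hbt2 : Tendsto (fun R : ℝ => v (-R) * u (-R)) atTop (nhds 0) :=
      hv0'.zero_mul_isBoundedUnder_le hbound'
    have hmain : Tendsto (fun R : ℝ => ∫ ξ in (-R)..R, v' ξ * u ξ) atTop (nhds J) :=
      intervalIntegral_tendsto_integral hInt tendsto_neg_atTop_atBot tendsto_id
    have := (hbt1.sub hbt2).sub hmain
    simpa using this
  · -- the norm estimate
    rw [norm_neg, hJ_def]
    calc ‖∫ ξ : ℝ, v' ξ * u ξ‖ ≤ ∫ ξ : ℝ, ‖v' ξ * u ξ‖ := norm_integral_le_integral_norm _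
      _ = ∫ ξ : ℝ, (2 * π * |x|)⁻¹ * (|deriv α ξ| / (c + α ξ) ^ 2) := by
          congr 1; funext ξ
          rw [norm_mul, hnorm_u ξ, hnorm_v' ξ, mul_comm]
      _ = (2 * π * |x|)⁻¹ * ∫ ξ : ℝ, |deriv α ξ| / (c + α ξ) ^ 2 := integral_const_mul _ _
      _ = (1 / (2 * π * |x|)) * ∫ ξ : ℝ, |deriv α ξ| / (c + α ξ) ^ 2 := by
          rw [one_div]
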